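/- Let M = (Q, A, τ) be an invertible Mealy automaton and let M̃ be its enriched automaton. Then for all u, v ∈ A*, the following are equivalent: (i) s@u = s@v for all s ∈ Q* (actions of M); (ii) s@u = s@v for all words s over Q ⊔ Q⁻¹ (actions of M̃). Consequently the dual automaton semigroups coincide: D_M = D_M̃. -/
import Mathlib


namespace AutGrp

/-- A Mealy automaton with state set `Q` and alphabet `A`:
`step q a = (q · a, q @ a)` (output letter, next state). -/
structure Mealy (Q A : Type*) where
  step : Q → A → A × Q

namespace Mealy

variable {Q A : Type*}

/-- The output letter `q · a`. -/
def o (M : Mealy Q A) (q : Q) (a : A) : A := (M.step q a).1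

/-- The next state `q @ a`. -/
def t (M : Mealy Q A) (q : Q) (a : A) : Q := (M.step q a).2

/-- Action of a single state on a word of letters: `q · w`. -/
def actA (M : Mealy Q A) : Q → List A → List A
  | _, [] => []
  | q, a :: w => M.o q a :: M.actA (M.t q a) w

/-- State reached from `q` after reading the word `w`: `q @ w`. -/
def stA (M : Mealy Q A) : Q → List A → Q
  | q, [] => q
  | q, a :: w => M.stA (M.t q a) w

/-- Action of a word of states on a word of letters: `s · u` (rightmost state acts first). -/
def actW (M : Mealy Q A) : List Q → List A → List A
  | [], u => u
  | q :: s, u => M.actA q (M.actW s u)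

/-- Word of states reached after reading `u`: `s @ u`. -/
def stW (M : Mealy Q A) : List Q → List A → List Q
  | [], _ => []
  | q :: s, u => M.stA q (M.actW s u) :: M.stW s u

/-- `M` is invertible if each state acts on `A` by a bijection. -/
def Invertible (M : Mealy Q A) : Prop := ∀ q : Q, Function.Bijective (M.o q)

/-- `M` is reversible if each letter acts on `Q` by a bijection. -/
def Reversible (M : Mealy Q A) : Prop := ∀ a : A, Function.Bijective (fun q => M.t q a)

theorem actA_append (M : Mealy Q A) (q : Q) (x y : List A) :
    M.actA q (x ++ y) = M.actA q x ++ M.actA (M.stA q x) y := by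
  induction x generalizing q with
  | nil => simp [actA, stA]
  | cons a w ih => simp [actA, stA, ih]

theorem stA_append (M : Mealy Q A) (q : Q) (x y : List A) :
    M.stA q (x ++ y) = M.stA (M.stA q x) y := by
  induction x generalizing q with
  | nil => simp [stA]
  | cons a w ih => simp [stA, ih]

theorem actW_append_states (M : Mealy Q A) (s u : List Q) (w : List A) :
    M.actW (s ++ u) w = M.actW s (M.actW u w) := by
  induction s with
  | nil => simp [actW]
  | cons q s ih => simp [actW, ih]

theorem actW_append (M : Mealy Q A) (s : List Q) (x y : List A) :
    M.actW s (x ++ y) = M.actW s x ++ M.actW (M.stW s x) y := by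
  induction s with
  | nil => simp [actW, stW]
  | cons q s ih => simp [actW, stW, ih, actA_append]

theorem stW_append (M : Mealy Q A) (s : List Q) (x y : List A) :
    M.stW s (x ++ y) = M.stW (M.stW s x) y := by
  induction s with
  | nil => simp [stW]
  | cons q s ih => simp [stW, actW, ih, actW_append, stA_append]

theorem actW_stW_congr (M : Mealy Q A) {p p' : List Q}
    (h : ∀ w : List A, M.actW p w = M.actW p' w) (u w : List A) :
    M.actW (M.stW p u) w = M.actW (M.stW p' u) w := by
  have h1 := M.actW_append p u w
  have h2 := M.actW_append p' u w
  rw [h u, h (u ++ w)] at h1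
  rw [h1] at h2
  exact List.append_cancel_left h2

/-- The congruence `~Q` on the free monoid `Q*`: two words of states are equivalent
iff they act identically on `A*`. -/
def conQ (M : Mealy Q A) : Con (FreeMonoid Q) where
  r s u := ∀ w : List A, M.actW s.toList w = M.actW u.toList w
  iseqv := ⟨fun _ _ => rfl, fun h w => (h w).symm, fun h1 h2 w => (h1 w).trans (h2 w)⟩
  mul' := by
    intro a b c d h1 h2 w
    simp only [FreeMonoid.toList_mul, actW_append_states]
    rw [h2 w, h1 (M.actW d.toList w)]

/-- The congruence `~A` on the free monoid `A*`: `u ~A v` iff `s @ u = s @ v` for all `s ∈ Q*`. -/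
def conA (M : Mealy Q A) : Con (FreeMonoid A) where
  r u v := ∀ s : List Q, M.stW s u.toList = M.stW s v.toList
  iseqv := ⟨fun _ _ => rfl, fun h s => (h s).symm, fun h1 h2 s => (h1 s).trans (h2 s)⟩
  mul' := by
    intro a b c d h1 h2 s
    simp only [FreeMonoid.toList_mul, stW_append]
    rw [h1 s, h2 (M.stW s b.toList)]

/-- The congruence `~D` on the free monoid `A*`: `u ~D v` iff `s @ u ~Q s @ v` for all `s ∈ Q*`. -/
def conD (M : Mealy Q A) : Con (FreeMonoid A) where
  r u v := ∀ (s : List Q) (w : List A),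
    M.actW (M.stW s u.toList) w = M.actW (M.stW s v.toList) w
  iseqv := ⟨fun _ _ _ => rfl, fun h s w => (h s w).symm,
    fun h1 h2 s w => (h1 s w).trans (h2 s w)⟩
  mul' := by
    intro a b c d h1 h2 s w
    simp only [FreeMonoid.toList_mul, stW_append]
    calc M.actW (M.stW (M.stW s a.toList) c.toList) w
        = M.actW (M.stW (M.stW s b.toList) c.toList) w :=
          M.actW_stW_congr (h1 s) c.toList w
      _ = M.actW (M.stW (M.stW s b.toList) d.toList) w := h2 _ w

/-- The automaton semigroup (monoid) `P_M = Q* / ~Q`. -/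
abbrev PM (M : Mealy Q A) : Type _ := M.conQ.Quotient

/-- The dual automaton semigroup (monoid) `D_M = A* / ~A`. -/
abbrev DM (M : Mealy Q A) : Type _ := M.conA.Quotient

/-- The monoid `D'_M = A* / ~D`. -/
abbrev DM' (M : Mealy Q A) : Type _ := M.conD.Quotient

/-- The class in `P_M` of a word of states. -/
def PMmk (M : Mealy Q A) (s : List Q) : M.PM := M.conQ.mk' (FreeMonoid.ofList s)

/-- The class in `D_M` of a word of letters. -/
def DMmk (M : Mealy Q A) (u : List A) : M.DM := M.conA.mk' (FreeMonoid.ofList u)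

/-- The class in `D'_M` of a word of letters. -/
def DM'mk (M : Mealy Q A) (u : List A) : M.DM' := M.conD.mk' (FreeMonoid.ofList u)

/-- `M` is self-invertible if `P_M` is a group. -/
def SelfInvertible (M : Mealy Q A) : Prop :=
  ∀ x : M.PM, ∃ y : M.PM, x * y = 1 ∧ y * x = 1

/-- The enriched automaton of an invertible automaton: states `Q ⊕ Q`, where `Sum.inl q` is `q`
and `Sum.inr q` is the formal inverse `q⁻¹`; `τ̃(q,a) = τ(q,a)` and
`τ̃(q⁻¹, q·a) = (a, (q@a)⁻¹)`. -/
noncomputable def enriched [Nonempty A] (M : Mealy Q A) : Mealy (Q ⊕ Q) A where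
  step := fun p b =>
    match p with
    | Sum.inl q => (M.o q b, Sum.inl (M.t q b))
    | Sum.inr q =>
        (Function.invFun (M.o q) b, Sum.inr (M.t q (Function.invFun (M.o q) b)))

/-- The monoid `Δ_M` presented by generators `Q ⊔ A` and relations `q a = (q·a)(q@a)`. -/
def deltaCon (M : Mealy Q A) : Con (FreeMonoid (Q ⊕ A)) :=
  conGen (fun w₁ w₂ => ∃ (q : Q) (a : A),
    w₁ = FreeMonoid.of (Sum.inl q) * FreeMonoid.of (Sum.inr a) ∧
    w₂ = FreeMonoid.of (Sum.inr (M.o q a)) * FreeMonoid.of (Sum.inl (M.t q a)))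

end Mealy

/-- Evaluation of a positive word in the letters `y` (for `true`) and `z` (for `false`). -/
def evalPair {S : Type*} [Monoid S] (y z : S) : List Bool → S
  | [] => 1
  | b :: l => (bif b then y else z) * evalPair y z l

/-- `y` and `z` freely generate a free subsemigroup of rank two: distinct nonempty
positive words in `y, z` represent distinct elements. -/
def IsFreePair {S : Type*} [Monoid S] (y z : S) : Prop :=
  ∀ l₁ l₂ : List Bool, l₁ ≠ [] → l₂ ≠ [] →
    evalPair y z l₁ = evalPair y z l₂ → l₁ = l₂

/-- `x` has infinite order: `{x, x², x³, …}` is infinite. -/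
def InfiniteOrder {S : Type*} [Monoid S] (x : S) : Prop :=
  (Set.range fun n : ℕ => x ^ (n + 1)).Infinite

/-- The length-`n` prefix of a sequence. -/
def seqTake {A : Type*} (ξ : ℕ → A) (n : ℕ) : List A := (List.range n).map ξ

/-- The `n`-th power `u^n` of a finite word. -/
def wpow {A : Type*} (u : List A) : ℕ → List A
  | 0 => []
  | n + 1 => u ++ wpow u n

/-- The eventually periodic sequence `u v v v ⋯`. -/
noncomputable def prePeriodic {A : Type*} [Nonempty A] (u v : List A) : ℕ → A :=
  fun n => if n < u.length then u.getD n (Classical.arbitrary A)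
    else v.getD ((n - u.length) % v.length) (Classical.arbitrary A)

/-- The periodic sequence `u^ω = u u u ⋯`. -/
noncomputable def periodic {A : Type*} [Nonempty A] (u : List A) : ℕ → A :=
  prePeriodic [] u

namespace Mealy

/-- The action of a word of states on a sequence: `s · ξ` is the sequence whose
length-`n` prefix is `s · (length-`n` prefix of `ξ`)`. -/
noncomputable def actSeq {Q A : Type*} [Nonempty A] (M : Mealy Q A)
    (s : List Q) (ξ : ℕ → A) : ℕ → A :=
  fun n => (M.actW s (seqTake ξ (n + 1))).getD n (Classical.arbitrary A)

/-- The language of all prefixes of the orbit of `a^ω` under `P_M`. -/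
def Lan {Q A : Type*} (M : Mealy Q A) (a : A) : Set (List A) :=
  {v | ∃ (k : ℕ) (s : List Q), v = M.actW s (List.replicate k a)}

/-- The degree of `v` in `Lan(a)`: the number of letters `b` with `v b ∈ Lan(a)`. -/
noncomputable def deg {Q A : Type*} (M : Mealy Q A) (a : A) (v : List A) : ℕ :=
  {b : A | v ++ [b] ∈ M.Lan a}.ncard

end Mealy

/-- A language is regular if it is recognized by a deterministic finite automaton. -/
def IsRegular {A : Type*} (L : Set (List A)) : Prop :=
  ∃ (σ : Type) (_ : Fintype σ) (dfa : DFA A σ), ∀ w : List A, w ∈ dfa.accepts ↔ w ∈ L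


namespace Mealy

variable {Q A : Type*}

theorem actA_length' (M : Mealy Q A) (q : Q) (w : List A) :
    (M.actA q w).length = w.length := by
  induction w generalizing q with
  | nil => rfl
  | cons a w ih => simp [actA, ih]

theorem stW_length' (M : Mealy Q A) (s : List Q) (w : List A) :
    (M.stW s w).length = s.length := by
  induction s with
  | nil => rfl
  | cons q s ih => simp [stW, ih]

theorem stW_append_states (M : Mealy Q A) (s t : List Q) (w : List A) :
    M.stW (s ++ t) w = M.stW s (M.actW t w) ++ M.stW t w := by
  induction s with
  | nil => simp [stW]
  | cons q s ih => simp [stW, actW_append_states, ih]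

theorem R_act (M : Mealy Q A) {u v : List A}
    (h : ∀ t : List Q, M.stW t u = M.stW t v) (t t' : List Q) :
    M.stW t' (M.actW t u) = M.stW t' (M.actW t v) := by
  have h1 := h (t' ++ t)
  rw [stW_append_states, stW_append_states] at h1
  exact (List.append_inj h1 (by simp [stW_length'])).1

theorem actA_injective' (M : Mealy Q A) (hinv : M.Invertible) (q : Q) :
    Function.Injective (M.actA q) := by
  intro x y h
  induction x generalizing q y with
  | nil =>
    cases y with
    | nil => rfl
    | cons b y => simp [actA] at h
  | cons a x ih =>
    cases y with
    | nil => simp [actA] at h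
    | cons b y =>
      simp only [actA, List.cons.injEq] at h
      obtain rfl : a = b := (hinv q).1 h.1
      exact congrArg (a :: ·) (ih (M.t q a) h.2)

theorem exists_period' [Fintype A] (M : Mealy Q A) (hinv : M.Invertible)
    (q : Q) (w : List A) :
    ∃ k, 0 < k ∧ (M.actA q)^[k] w = w := by
  have hlen : ∀ i, ((M.actA q)^[i] w).length = w.length := by
    intro i
    induction i with
    | zero => rfl
    | succ n ihn => rw [Function.iterate_succ_apply', actA_length', ihn]
  haveI : Finite {l : List A // l.length = w.length} :=
    (List.finite_length_eq A w.length).to_subtype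
  obtain ⟨i, j, hne, heq⟩ := Finite.exists_ne_map_eq_of_infinite
    (fun i : ℕ => (⟨(M.actA q)^[i] w, hlen i⟩ : {l : List A // l.length = w.length}))
  have heq' : (M.actA q)^[i] w = (M.actA q)^[j] w := by
    have := congrArg Subtype.val heq
    simpa using this
  rcases Nat.lt_or_ge i j with hij | hij
  · refine ⟨j - i, Nat.sub_pos_of_lt hij, ?_⟩
    have : (M.actA q)^[i] ((M.actA q)^[j - i] w) = (M.actA q)^[i] w := by
      rw [← Function.iterate_add_apply, Nat.add_sub_cancel' hij.le, ← heq']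
    exact ((M.actA_injective' hinv q).iterate i) this
  · have hij' : j < i := lt_of_le_of_ne hij (fun h => hne h.symm)
    refine ⟨i - j, Nat.sub_pos_of_lt hij', ?_⟩
    have : (M.actA q)^[j] ((M.actA q)^[i - j] w) = (M.actA q)^[j] w := by
      rw [← Function.iterate_add_apply, Nat.add_sub_cancel' hij'.le, heq']
    exact ((M.actA_injective' hinv q).iterate j) this

theorem actW_replicate' (M : Mealy Q A) (q : Q) (m : ℕ) (w : List A) :
    M.actW (List.replicate m q) w = (M.actA q)^[m] w := by
  induction m with
  | zero => rfl
  | succ n ihn =>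
    rw [List.replicate_succ]
    simp only [actW, ihn, Function.iterate_succ_apply']

theorem enriched_inl [Nonempty A] (M : Mealy Q A) (q : Q) (w : List A) :
    M.enriched.actA (Sum.inl q) w = M.actA q w ∧
    M.enriched.stA (Sum.inl q) w = Sum.inl (M.stA q w) := by
  induction w generalizing q with
  | nil => exact ⟨rfl, rfl⟩
  | cons a w ih =>
    have ho : M.enriched.o (Sum.inl q) a = M.o q a := rfl
    have ht : M.enriched.t (Sum.inl q) a = Sum.inl (M.t q a) := rfl
    constructor
    · simp only [actA, ho, ht, (ih (M.t q a)).1]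
    · simp only [stA, actA, ht, (ih (M.t q a)).2]

theorem enriched_inr [Nonempty A] (M : Mealy Q A) (hinv : M.Invertible)
    (q : Q) (x : List A) :
    M.enriched.actA (Sum.inr q) (M.actA q x) = x ∧
    M.enriched.stA (Sum.inr q) (M.actA q x) = Sum.inr (M.stA q x) := by
  induction x generalizing q with
  | nil => exact ⟨rfl, rfl⟩
  | cons a x ih =>
    have hb : Function.invFun (M.o q) (M.o q a) = a :=
      Function.leftInverse_invFun (hinv q).1 a
    have ho : M.enriched.o (Sum.inr q) (M.o q a) = a := hb
    have ht : M.enriched.t (Sum.inr q) (M.o q a) = Sum.inr (M.t q a) := by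
      show Sum.inr (M.t q (Function.invFun (M.o q) (M.o q a))) = Sum.inr (M.t q a)
      rw [hb]
    constructor
    · show M.enriched.actA (Sum.inr q) (M.o q a :: M.actA (M.t q a) x) = a :: x
      simp only [actA, ho, ht, (ih (M.t q a)).1]
    · show M.enriched.stA (Sum.inr q) (M.o q a :: M.actA (M.t q a) x) = _
      simp only [stA, actA, ht, (ih (M.t q a)).2]

theorem enriched_map_inl [Nonempty A] (M : Mealy Q A) (s : List Q) (w : List A) :
    M.enriched.actW (s.map Sum.inl) w = M.actW s w ∧
    M.enriched.stW (s.map Sum.inl) w = (M.stW s w).map Sum.inl := by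
  induction s with
  | nil => exact ⟨rfl, rfl⟩
  | cons q s ih =>
    constructor
    · simp only [List.map_cons, actW, ih.1, (M.enriched_inl q (M.actW s w)).1]
    · simp only [List.map_cons, stW, actW, ih.1, ih.2,
        (M.enriched_inl q (M.actW s w)).2]

theorem main_lemma [Fintype A] [Nonempty A] (M : Mealy Q A) (hinv : M.Invertible)
    (s : List (Q ⊕ Q)) {u v : List A}
    (h : ∀ t : List Q, M.stW t u = M.stW t v) :
    M.enriched.stW s u = M.enriched.stW s v ∧
    ∀ t : List Q, M.stW t (M.enriched.actW s u) = M.stW t (M.enriched.actW s v) := by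
  induction s with
  | nil => exact ⟨rfl, h⟩
  | cons p s ih =>
    obtain ⟨hst, hR⟩ := ih
    set u' := M.enriched.actW s u with hu'
    set v' := M.enriched.actW s v with hv'
    cases p with
    | inl q =>
      have hact : M.enriched.actW (Sum.inl q :: s) u = M.actA q u' := by
        simp only [actW, ← hu', (M.enriched_inl q u').1]
      have hact2 : M.enriched.actW (Sum.inl q :: s) v = M.actA q v' := by
        simp only [actW, ← hv', (M.enriched_inl q v').1]
      have hhead : M.stA q u' = M.stA q v' := by
        have := hR [q]
        simpa [stW, actW] using this
      constructor
      · simp only [stW]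
        rw [← hu', ← hv', hst, (M.enriched_inl q u').2, (M.enriched_inl q v').2, hhead]
      · intro t
        rw [hact, hact2]
        have := M.R_act hR [q] t
        simpa [actW] using this
    | inr q =>
      obtain ⟨k1, hk1, hper1⟩ := M.exists_period' hinv q u'
      obtain ⟨k2, hk2, hper2⟩ := M.exists_period' hinv q v'
      set k := k1 * k2 with hk
      have hkpos : 0 < k := Nat.mul_pos hk1 hk2
      have hku : (M.actA q)^[k] u' = u' := by
        rw [hk, Function.iterate_mul]
        exact Function.iterate_fixed hper1 k2
      have hkv : (M.actA q)^[k] v' = v' := by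
        rw [hk, Nat.mul_comm, Function.iterate_mul]
        exact Function.iterate_fixed hper2 k1
      set x := (M.actA q)^[k - 1] u' with hx
      set y := (M.actA q)^[k - 1] v' with hy
      have hax : M.actA q x = u' := by
        have h2 : (M.actA q)^[k - 1 + 1] u' = M.actA q ((M.actA q)^[k - 1] u') :=
          Function.iterate_succ_apply' _ _ _
        rw [Nat.sub_add_cancel hkpos, hku, ← hx] at h2
        exact h2.symm
      have hay : M.actA q y = v' := by
        have h2 : (M.actA q)^[k - 1 + 1] v' = M.actA q ((M.actA q)^[k - 1] v') :=
          Function.iterate_succ_apply' _ _ _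
        rw [Nat.sub_add_cancel hkpos, hkv, ← hy] at h2
        exact h2.symm
      have hxw : x = M.actW (List.replicate (k - 1) q) u' := by
        rw [actW_replicate']
      have hyw : y = M.actW (List.replicate (k - 1) q) v' := by
        rw [actW_replicate']
      have hRxy : ∀ t : List Q, M.stW t x = M.stW t y := by
        intro t
        rw [hxw, hyw]
        exact M.R_act hR (List.replicate (k - 1) q) t
      have hinvu := M.enriched_inr hinv q x
      have hinvv := M.enriched_inr hinv q y
      rw [hax] at hinvu
      rw [hay] at hinvv
      have hact : M.enriched.actW (Sum.inr q :: s) u = x := by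
        simp only [actW, ← hu', hinvu.1]
      have hact2 : M.enriched.actW (Sum.inr q :: s) v = y := by
        simp only [actW, ← hv', hinvv.1]
      have hhead : M.stA q x = M.stA q y := by
        have := hRxy [q]
        simpa [stW, actW] using this
      constructor
      · simp only [stW]
        rw [← hu', ← hv', hst, hinvu.2, hinvv.2, hhead]
      · intro t
        rw [hact, hact2]
        exact hRxy t

end Mealy

/-- For an invertible Mealy automaton `M` with enriched automaton `M̃`,
two words `u, v ∈ A*` satisfy `s@u = s@v` for all `s ∈ Q*` iff they satisfy it for all
words `s` over `Q ⊔ Q⁻¹`; consequently `D_M = D_M̃`. -/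
theorem stmt10 {Q A : Type*} [Fintype Q] [Nonempty Q] [Fintype A] [Nonempty A]
    (M : Mealy Q A) (hinv : M.Invertible) :
    ∀ u v : List A,
      (∀ s : List Q, M.stW s u = M.stW s v) ↔
      (∀ s : List (Q ⊕ Q), (M.enriched).stW s u = (M.enriched).stW s v) := by
  intro u v
  constructor
  · intro h s
    exact (M.main_lemma hinv s h).1
  · intro h t
    have h1 := h (t.map Sum.inl)
    rw [(M.enriched_map_inl t u).2, (M.enriched_map_inl t v).2] at h1
    exact List.map_injective_iff.mpr Sum.inl_injective h1

end AutGrp
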